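/- Let q ≥ 2 and let v, d, m be positive integers with v < m and d ≤ m - v. With the construction of Theorem 4 (f^p_n built from an EBF f on {1,…,m-v} plus linear terms n_α x_{π_α(1)} and b·(Σ_α p_α x_{π_α(m_α)} + Σ_k p_{k+d} x_{m-v+k}) with gcd(b,q)=1), the family {F^0,…,F^{q^{v+d}-1}}, where F^p = {f^p_0,…,f^p_{q^d-1}} consists of length-q^m sequences, forms a (q^{v+d}, q^d, q^m, q^{m-v})-ZCCS. Moreover this ZCCS is optimal: q^{v+d} = q^d · ⌊q^m / q^{m-v}⌋, meeting the bound M ≤ N⌊L/Z⌋ with equality. -/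

import Mathlib

open Finset Complex

/-- The primitive `q`-th root of unity `ξ = e^{2πi/q}`. -/
noncomputable def xiq (q : ℕ) : ℂ := Complex.exp (2 * Real.pi * Complex.I / q)

/-- The complex value `ξ^x` attached to `x ∈ ℤ_q`. -/
noncomputable def ec (q : ℕ) (x : ZMod q) : ℂ := xiq q ^ x.val

/-- The `k`-th `q`-ary digit (1-indexed) of the natural number `i`. -/
def dig (q i k : ℕ) : ℕ := i / q ^ (k - 1) % q

/-- Aperiodic cross-correlation of two length-`len` `ℤ_q`-valued sequences at shift `τ`. -/
noncomputable def Rq (q len : ℕ) (a b : ℕ → ZMod q) (τ : ℤ) : ℂ :=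
  if 0 ≤ τ then ∑ i ∈ Finset.range (len - τ.toNat), ec q (a i - b (i + τ.toNat))
  else ∑ i ∈ Finset.range (len - (-τ).toNat), ec q (a (i + (-τ).toNat) - b i)

/-- The EBF `f^p_n` of Theorem 4, evaluated at the `q`-ary digit vector of `i`. -/
def fpnZ (q m d v b : ℕ) (mα : ℕ → ℕ) (π : ℕ → ℕ → ℕ) (a : ℕ → ℕ → ℕ)
    (h : ℕ → ℕ → ZMod q) (h0 : ZMod q) (p n i : ℕ) : ZMod q :=
  (∑ α ∈ Finset.Icc 1 d, ∑ β ∈ Finset.Icc 1 (mα α - 1),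
      (a α β : ZMod q) * (dig q i (π α β) : ZMod q) * (dig q i (π α (β + 1)) : ZMod q))
  + (∑ l ∈ Finset.Icc 1 (q - 1), ∑ u' ∈ Finset.Icc 1 m,
      h u' l * (dig q i u' : ZMod q) ^ l) + h0
  + (∑ α ∈ Finset.Icc 1 d, (dig q n α : ZMod q) * (dig q i (π α 1) : ZMod q))
  + (b : ZMod q) *
      ((∑ α ∈ Finset.Icc 1 d, (dig q p α : ZMod q) * (dig q i (π α (mα α)) : ZMod q))
        + ∑ k ∈ Finset.Icc 1 v, (dig q p (k + d) : ZMod q) * (dig q i (m - v + k) : ZMod q))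

lemma xiq_pow (q n : ℕ) : xiq q ^ n = Complex.exp (2 * Real.pi * Complex.I * n / q) := by
  rw [xiq, ← Complex.exp_nat_mul]; ring_nf

lemma xiq_pow_q {q : ℕ} (hq : q ≠ 0) : xiq q ^ q = 1 := by
  rw [xiq_pow]
  have h : 2 * (Real.pi:ℂ) * Complex.I * q / q = 2 * Real.pi * Complex.I := by
    have : (q:ℂ) ≠ 0 := Nat.cast_ne_zero.mpr hq
    field_simp
  rw [h]
  exact Complex.exp_eq_one_iff.mpr ⟨1, by push_cast; ring⟩

lemma xiq_pow_mod {q : ℕ} (hq : q ≠ 0) (n : ℕ) : xiq q ^ (n % q) = xiq q ^ n := by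
  conv_rhs => rw [← Nat.mod_add_div n q]
  rw [pow_add, pow_mul, xiq_pow_q hq, one_pow, mul_one]

lemma ec_zero {q : ℕ} (hq : 2 ≤ q) : ec q 0 = 1 := by
  haveI : NeZero q := ⟨by omega⟩
  rw [ec, ZMod.val_zero, pow_zero]

lemma ec_add {q : ℕ} (hq : 2 ≤ q) (x y : ZMod q) : ec q (x + y) = ec q x * ec q y := by
  haveI : NeZero q := ⟨by omega⟩
  rw [ec, ec, ec, ZMod.val_add, xiq_pow_mod (by omega), pow_add]

lemma ec_ne_zero {q : ℕ} (x : ZMod q) : ec q x ≠ 0 := by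
  rw [ec]; exact pow_ne_zero _ (by rw [xiq]; exact Complex.exp_ne_zero _)

lemma ec_ne_one {q : ℕ} (hq : 2 ≤ q) {x : ZMod q} (hx : x ≠ 0) : ec q x ≠ 1 := by
  haveI : NeZero q := ⟨by omega⟩
  rw [ec, xiq_pow]
  intro h
  obtain ⟨k, hk⟩ := Complex.exp_eq_one_iff.mp h
  have hq0 : (q:ℂ) ≠ 0 := Nat.cast_ne_zero.mpr (by omega)
  have hpi : (Real.pi:ℂ) ≠ 0 := by exact_mod_cast Real.pi_ne_zero
  have hI : Complex.I ≠ 0 := Complex.I_ne_zero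
  have h2 : (x.val : ℂ) = k * q := by
    have h2' := congrArg (· * (q:ℂ)) hk
    simp only [div_mul_cancel₀ _ hq0] at h2'
    have hne : (2:ℂ) * Real.pi * Complex.I ≠ 0 := by
      intro hz
      apply hpi
      have := mul_ne_zero (mul_ne_zero (two_ne_zero' ℂ) hpi) hI
      exact absurd hz this
    apply mul_left_cancel₀ hne
    linear_combination h2'
  have h3 : (x.val : ℤ) = k * q := by exact_mod_cast h2
  have hv1 : 0 < x.val := Nat.pos_of_ne_zero (fun hh => hx ((ZMod.val_eq_zero x).mp hh))
  have hv2 : x.val < q := ZMod.val_lt x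
  have hqz : (0:ℤ) < q := by exact_mod_cast Nat.pos_of_ne_zero (by omega)
  rcases le_or_gt k 0 with hk0 | hk0
  · nlinarith
  · have : 1 ≤ k := hk0
    nlinarith

lemma ec_pow {q : ℕ} (hq : 2 ≤ q) (c : ZMod q) (y : ℕ) : ec q (c * y) = ec q c ^ y := by
  induction y with
  | zero => simp [ec_zero hq]
  | succ n ih => push_cast; rw [mul_add, mul_one, ec_add hq, ih, pow_succ]

lemma csum {q : ℕ} (hq : 2 ≤ q) {c : ZMod q} (hc : c ≠ 0) (w : ZMod q) :
    ∑ y ∈ range q, ec q (w + c * y) = 0 := by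
  have : ∀ y, ec q (w + c * (y:ℕ)) = ec q w * ec q c ^ y := fun y => by
    rw [ec_add hq, ec_pow hq]
  simp_rw [this, ← mul_sum]
  have h1 : ec q c ≠ 1 := ec_ne_one hq hc
  rw [geom_sum_eq h1]
  have h2 : ec q c ^ q = 1 := by
    rw [← ec_pow hq, ZMod.natCast_self, mul_zero, ec_zero hq]
  rw [h2]; simp

def setd (q i u y : ℕ) : ℕ := i % q ^ (u-1) + y * q ^ (u-1) + (i / q ^ u) * q ^ u

section digs
variable {q u : ℕ}

lemma dig_lt (hq : 0 < q) (i k : ℕ) : dig q i k < q := Nat.mod_lt _ hq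

lemma pow_split (hu : 1 ≤ u) : q ^ u = q ^ (u-1) * q := by
  conv_lhs => rw [show u = (u-1)+1 by omega]
  rw [pow_succ]

lemma dig_decomp (hu : 1 ≤ u) (i : ℕ) :
    i % q ^ (u-1) + dig q i u * q ^ (u-1) + (i / q ^ u) * q ^ u = i := by
  have h1 : i % q ^ u = i % q ^ (u-1) + q ^ (u-1) * (i / q ^ (u-1) % q) := by
    rw [pow_split hu, Nat.mod_mul]
  rw [dig]
  calc i % q^(u-1) + i/q^(u-1)%q * q^(u-1) + i/q^u * q^u
      = (i % q^u) + q^u * (i/q^u) := by rw [h1]; ring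
    _ = i := Nat.mod_add_div _ _

lemma setd_dig_self (hu : 1 ≤ u) (i : ℕ) : setd q i u (dig q i u) = i := dig_decomp hu i

lemma low_lt (hq : 0 < q) (hu : 1 ≤ u) {y : ℕ} (hy : y < q) (i : ℕ) :
    i % q ^ (u-1) + y * q ^ (u-1) < q ^ u := by
  have h1 : i % q ^ (u-1) < q ^ (u-1) := Nat.mod_lt _ (Nat.pow_pos hq)
  have h2 : y * q ^ (u-1) ≤ (q-1) * q ^ (u-1) := Nat.mul_le_mul_right _ (by omega)
  have h3 : q ^ u = q ^ (u-1) * q := pow_split hu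
  nlinarith [Nat.pow_pos (n := u-1) hq]

lemma setd_divu (hq : 0 < q) (hu : 1 ≤ u) {y : ℕ} (hy : y < q) (i : ℕ) :
    setd q i u y / q ^ u = i / q ^ u := by
  rw [setd, Nat.add_mul_div_right _ _ (Nat.pow_pos hq),
    Nat.div_eq_of_lt (low_lt hq hu hy i), zero_add]

lemma setd_mod (hq : 0 < q) (hu : 1 ≤ u) (y i : ℕ) :
    setd q i u y % q ^ (u-1) = i % q ^ (u-1) := by
  rw [setd, pow_split hu]
  have h : i % q ^ (u-1) + y * q^(u-1) + i / (q^(u-1)*q) * (q^(u-1)*q)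
      = i % q ^ (u-1) + q^(u-1) * (y + q * (i / (q^(u-1)*q))) := by ring
  rw [h, Nat.add_mul_mod_self_left, Nat.mod_mod_of_dvd _ dvd_rfl]

lemma dig_setd_eq (hq : 0 < q) (hu : 1 ≤ u) {y : ℕ} (hy : y < q) (i : ℕ) :
    dig q (setd q i u y) u = y := by
  rw [dig, setd]
  have h : i % q ^ (u-1) + y * q^(u-1) + i / q^u * q^u
      = (i % q ^ (u-1)) + q^(u-1) * (y + q * (i / q^u)) := by
    rw [pow_split hu]; ring
  rw [h, Nat.add_mul_div_left _ _ (Nat.pow_pos hq),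
    Nat.div_eq_of_lt (Nat.mod_lt _ (Nat.pow_pos hq)), zero_add,
    Nat.add_mul_mod_self_left, Nat.mod_eq_of_lt hy]

lemma dig_of_mod (hq : 0 < q) {s k : ℕ} (hs : 1 ≤ s) (hsk : s ≤ k) (x : ℕ) :
    dig q (x % q ^ k) s = dig q x s := by
  rw [dig, dig]
  have hk : q ^ k = q ^ (s-1) * q ^ (k-s+1) := by rw [← pow_add]; congr 1; omega
  rw [hk, Nat.mod_mul_right_div_self]
  have : q ∣ q ^ (k-s+1) := dvd_pow_self q (by omega)
  rw [Nat.mod_mod_of_dvd _ this]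

lemma dig_setd_ne (hq : 0 < q) (hu : 1 ≤ u) {y : ℕ} (hy : y < q) {k : ℕ} (hk1 : 1 ≤ k)
    (hk : k ≠ u) (i : ℕ) : dig q (setd q i u y) k = dig q i k := by
  rcases lt_or_gt_of_ne hk with hlt | hgt
  · have hks : k ≤ u - 1 := by omega
    rw [← dig_of_mod hq hk1 hks (setd q i u y), setd_mod hq hu, dig_of_mod hq hk1 hks]
  · have h1 : q ^ (k-1) = q ^ u * q ^ (k-1-u) := by rw [← pow_add]; congr 1; omega
    rw [dig, dig, h1, ← Nat.div_div_eq_div_mul, ← Nat.div_div_eq_div_mul,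
      setd_divu hq hu hy]

lemma setd_lt (hq : 0 < q) (hu : 1 ≤ u) {M y i : ℕ} (hum : u ≤ M) (hy : y < q)
    (hi : i < q ^ M) : setd q i u y < q ^ M := by
  have h1 : i % q ^ (u-1) + y * q ^ (u-1) < q ^ u := low_lt hq hu hy i
  have h2 : i / q ^ u + 1 ≤ q ^ (M-u) := by
    have : i / q ^ u < q ^ (M-u) := by
      rw [Nat.div_lt_iff_lt_mul (Nat.pow_pos hq)]
      calc i < q ^ M := hi
        _ = q ^ (M-u) * q ^ u := by rw [← pow_add]; congr 1; omega
    omega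
  calc setd q i u y < q ^ u + (i / q ^ u) * q ^ u := Nat.add_lt_add_right h1 _
    _ = (i / q ^ u + 1) * q ^ u := by ring
    _ ≤ q ^ (M-u) * q ^ u := Nat.mul_le_mul_right _ h2
    _ = q ^ M := by rw [← pow_add]; congr 1; omega

lemma setd_add (hu : 1 ≤ u) (y i : ℕ) :
    setd q i u y + dig q i u * q ^ (u-1) = i + y * q ^ (u-1) := by
  have h := dig_decomp (q := q) hu i
  rw [setd]; linarith

lemma setd_setd (hq : 0 < q) (hu : 1 ≤ u) {y : ℕ} (hy : y < q) (y' i : ℕ) :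
    setd q (setd q i u y) u y' = setd q i u y' := by
  rw [setd, setd_mod hq hu, setd_divu hq hu hy]; rfl

lemma eq_of_dig_eq (hq : 0 < q) {k : ℕ} :
    ∀ {x y : ℕ}, (∀ s, 1 ≤ s → s ≤ k → dig q x s = dig q y s) → x < q ^ k → y < q ^ k → x = y := by
  induction k with
  | zero => intro x y _ hx hy; simp at hx hy; omega
  | succ k ih =>
    intro x y hd hx hy
    have h1 : x % q = y % q := by
      have := hd 1 le_rfl (by omega)
      simpa [dig] using this
    have hdiv : ∀ s, 1 ≤ s → s ≤ k → dig q (x/q) s = dig q (y/q) s := by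
      intro s h1s h2s
      have hthis := hd (s+1) (by omega) (by omega)
      simp only [dig, Nat.add_sub_cancel] at hthis
      simp only [dig, Nat.div_div_eq_div_mul]
      have hp : q * q ^ (s-1) = q ^ s := by
        rw [← pow_succ']; congr 1; omega
      rw [hp]
      exact hthis
    have h2 : x / q = y / q := by
      apply ih hdiv
      · rw [Nat.div_lt_iff_lt_mul hq]; rw [pow_succ] at hx; exact hx
      · rw [Nat.div_lt_iff_lt_mul hq]; rw [pow_succ] at hy; exact hy
    calc x = q * (x/q) + x % q := (Nat.div_add_mod x q).symm
      _ = q * (y/q) + y % q := by rw [h1, h2]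
      _ = y := Nat.div_add_mod y q

lemma mod_eq_of_dig_eq (hq : 0 < q) {k x y : ℕ}
    (hd : ∀ s, 1 ≤ s → s ≤ k → dig q x s = dig q y s) : x % q ^ k = y % q ^ k := by
  apply eq_of_dig_eq hq (k := k) _ (Nat.mod_lt _ (Nat.pow_pos hq))
    (Nat.mod_lt _ (Nat.pow_pos hq))
  intro s hs1 hs2
  rw [dig_of_mod hq hs1 hs2, dig_of_mod hq hs1 hs2, hd s hs1 hs2]

lemma dig_add_mul_pow (hq : 0 < q) {e s : ℕ} (hs1 : 1 ≤ s) (hse : s ≤ e) (r c : ℕ) :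
    dig q (r + c * q ^ e) s = dig q r s := by
  rw [dig, dig]
  have he : q ^ e = q ^ (s-1) * (q * q ^ (e - s)) := by
    rw [← pow_succ', ← pow_add]; congr 1; omega
  rw [he, show r + c * (q^(s-1) * (q * q^(e-s))) = r + q^(s-1) * (c * (q * q^(e-s))) by ring,
    Nat.add_mul_div_left _ _ (Nat.pow_pos hq),
    show c * (q * q^(e-s)) = c * q^(e-s) * q by ring, Nat.add_mul_mod_self_right]

lemma dig_top (hq : 0 < q) {e r c : ℕ} (hr : r < q ^ e) (hc : c < q) :
    dig q (r + c * q ^ e) (e+1) = c := by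
  rw [dig, Nat.add_sub_cancel, Nat.add_mul_div_right _ _ (Nat.pow_pos hq),
    Nat.div_eq_of_lt hr, zero_add, Nat.mod_eq_of_lt hc]

end digs


-- splitting a sum over range (q^(e+1))
lemma sum_range_pow_succ {M : Type*} [AddCommMonoid M] (q e : ℕ) (hq : 0 < q) (f : ℕ → M) :
    ∑ n ∈ range (q^(e+1)), f n = ∑ c ∈ range q, ∑ r ∈ range (q^e), f (r + c * q^e) := by
  rw [← Finset.sum_product']
  apply Finset.sum_nbij' (i := fun n => (n / q^e, n % q^e)) (j := fun cr => cr.2 + cr.1 * q^e)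
  · intro n hn
    simp only [Finset.mem_product, Finset.mem_range] at *
    constructor
    · rw [Nat.div_lt_iff_lt_mul (Nat.pow_pos hq)]
      calc n < q^(e+1) := hn
        _ = q * q ^ e := by rw [pow_succ']
    · exact Nat.mod_lt _ (Nat.pow_pos hq)
  · intro cr hcr
    simp only [Finset.mem_product, Finset.mem_range] at *
    calc cr.2 + cr.1 * q^e < q^e + cr.1 * q^e := Nat.add_lt_add_right hcr.2 _
      _ = (cr.1 + 1) * q^e := by ring
      _ ≤ q * q^e := Nat.mul_le_mul_right _ (by omega)
      _ = q^(e+1) := (pow_succ' q e).symm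
  · intro n hn
    simp only
    rw [Nat.mod_add_div' n (q^e)]
  · intro cr hcr
    simp only [Finset.mem_product, Finset.mem_range] at hcr
    have h1 : (cr.2 + cr.1 * q^e) / q^e = cr.1 := by
      rw [Nat.add_mul_div_right _ _ (Nat.pow_pos hq), Nat.div_eq_of_lt hcr.2]; omega
    have h2 : (cr.2 + cr.1 * q^e) % q^e = cr.2 := by
      rw [Nat.add_mul_mod_self_right, Nat.mod_eq_of_lt hcr.2]
    rw [h1, h2]
  · intro n hn
    simp only
    rw [Nat.mod_add_div' n (q^e)]

lemma digitsum {q : ℕ} (hq : 2 ≤ q) (e : ℕ) (c : ℕ → ZMod q) (w : ZMod q) :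
    ∑ n ∈ range (q^e), ec q (w + ∑ α ∈ Icc 1 e, (dig q n α : ZMod q) * c α)
      = if ∀ α ∈ Icc 1 e, c α = 0 then (q:ℂ)^e * ec q w else 0 := by
  induction e generalizing w with
  | zero =>
    simp
  | succ e ih =>
    have hq0 : 0 < q := by omega
    rw [sum_range_pow_succ q e hq0]
    have hstep : ∀ cc ∈ range q, ∀ r ∈ range (q^e),
        ec q (w + ∑ α ∈ Icc 1 (e+1), (dig q (r + cc * q^e) α : ZMod q) * c α)
        = ec q ((w + (cc:ZMod q) * c (e+1)) + ∑ α ∈ Icc 1 e, (dig q r α : ZMod q) * c α) := by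
      intro cc hcc r hr
      simp only [Finset.mem_range] at hcc hr
      congr 1
      have hins : Finset.Icc 1 (e+1) = insert (e+1) (Finset.Icc 1 e) := by
        ext x; simp [Finset.mem_Icc, Finset.mem_insert]; omega
      rw [hins, Finset.sum_insert (by simp), dig_top hq0 hr hcc]
      have : ∀ α ∈ Icc 1 e, (dig q (r + cc * q^e) α : ZMod q) * c α
          = (dig q r α : ZMod q) * c α := by
        intro α hα
        simp only [Finset.mem_Icc] at hα
        rw [dig_add_mul_pow hq0 hα.1 hα.2]
      rw [Finset.sum_congr rfl this]
      ring
    calc ∑ cc ∈ range q, ∑ r ∈ range (q^e),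
          ec q (w + ∑ α ∈ Icc 1 (e+1), (dig q (r + cc * q^e) α : ZMod q) * c α)
        = ∑ cc ∈ range q, ∑ r ∈ range (q^e),
          ec q ((w + (cc:ZMod q) * c (e+1)) + ∑ α ∈ Icc 1 e, (dig q r α : ZMod q) * c α) := by
          apply Finset.sum_congr rfl; intro cc hcc
          exact Finset.sum_congr rfl (hstep cc hcc)
      _ = ∑ cc ∈ range q,
          (if ∀ α ∈ Icc 1 e, c α = 0 then (q:ℂ)^e * ec q (w + (cc:ZMod q) * c (e+1)) else 0) := by
          apply Finset.sum_congr rfl; intro cc hcc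
          exact ih _
      _ = if ∀ α ∈ Icc 1 (e+1), c α = 0 then (q:ℂ)^(e+1) * ec q w else 0 := by
          by_cases hlow : ∀ α ∈ Icc 1 e, c α = 0
          · simp only [if_pos hlow, ← Finset.mul_sum]
            by_cases htop : c (e+1) = 0
            · have hcond : ∀ α ∈ Icc 1 (e+1), c α = 0 := by
                intro α hα
                simp only [Finset.mem_Icc] at hα
                rcases Nat.lt_or_ge α (e+1) with hlt | hge
                · exact hlow α (Finset.mem_Icc.mpr (by omega))
                · have : α = e + 1 := by omega
                  rw [this]; exact htop
              rw [if_pos hcond]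
              have : ∀ cc ∈ range q, ec q (w + (cc:ZMod q) * c (e+1)) = ec q w := by
                intro cc _; rw [htop, mul_zero, add_zero]
              rw [Finset.sum_congr rfl this, Finset.sum_const, Finset.card_range]
              push_cast; ring
            · have hcond : ¬ ∀ α ∈ Icc 1 (e+1), c α = 0 := by
                intro hcl; exact htop (hcl (e+1) (Finset.mem_Icc.mpr (by omega)))
              rw [if_neg hcond]
              have : ∑ cc ∈ range q, ec q (w + (cc:ZMod q) * c (e+1))
                  = ∑ cc ∈ range q, ec q (w + c (e+1) * (cc:ℕ)) := by
                apply Finset.sum_congr rfl; intro cc _; ring_nf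
              rw [this, csum hq htop w, mul_zero]
          · have hcond : ¬ ∀ α ∈ Icc 1 (e+1), c α = 0 := by
              intro hcl
              exact hlow fun α hα => by
                simp only [Finset.mem_Icc] at hα
                exact hcl α (Finset.mem_Icc.mpr (by omega))
            simp only [if_neg hlow, Finset.sum_const_zero, if_neg hcond]

lemma groupzero {q : ℕ} (hq : 2 ≤ q) (S : Finset ℕ) (U : ℕ → ℕ) (C : ℕ → ℂ)
    (hU1 : ∀ i ∈ S, 1 ≤ U i)
    (hstab : ∀ i ∈ S, ∀ y < q, setd q i (U i) y ∈ S ∧ U (setd q i (U i) y) = U i)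
    (hzero : ∀ i ∈ S, ∑ y ∈ range q, C (setd q i (U i) y) = 0) :
    ∑ i ∈ S, C i = 0 := by
  classical
  have q0 : 0 < q := by omega
  set Φ : ℕ → ℕ := fun i => setd q i (U i) 0 with hΦdef
  rw [← Finset.sum_fiberwise_of_maps_to
    (t := S.image Φ) (fun i hi => Finset.mem_image_of_mem Φ hi) C]
  apply Finset.sum_eq_zero
  intro r hr
  obtain ⟨i₀, hi₀S, hΦi₀⟩ := Finset.mem_image.mp hr
  have hrS : r ∈ S := by rw [← hΦi₀]; exact (hstab i₀ hi₀S 0 q0).1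
  have hUr : U r = U i₀ := by rw [← hΦi₀]; exact (hstab i₀ hi₀S 0 q0).2
  have hU1r : 1 ≤ U r := hU1 r hrS
  have hdigr : dig q r (U r) = 0 := by
    rw [hUr, ← hΦi₀]; exact dig_setd_eq q0 (hU1 i₀ hi₀S) q0 i₀
  have hr0 : setd q r (U r) 0 = r := by
    conv_lhs => rw [← hdigr]
    exact setd_dig_self hU1r r
  have hset : S.filter (fun i => Φ i = r) = (range q).image (fun y => setd q r (U r) y) := by
    apply Finset.ext
    intro i
    simp only [Finset.mem_filter, Finset.mem_image, Finset.mem_range]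
    constructor
    · rintro ⟨hiS, hΦi⟩
      refine ⟨dig q i (U i), dig_lt q0 i (U i), ?_⟩
      have hUri : U r = U i := by rw [← hΦi]; exact (hstab i hiS 0 q0).2
      rw [hUri, ← hΦi]
      show setd q (setd q i (U i) 0) (U i) (dig q i (U i)) = i
      rw [setd_setd q0 (hU1 i hiS) q0, setd_dig_self (hU1 i hiS)]
    · rintro ⟨y, hy, rfl⟩
      have h1 := hstab r hrS y hy
      refine ⟨h1.1, ?_⟩
      show setd q (setd q r (U r) y) (U (setd q r (U r) y)) 0 = r
      rw [h1.2, setd_setd q0 hU1r hy, hr0]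
  rw [hset, Finset.sum_image ?inj]
  · exact hzero r hrS
  case inj =>
    intro y hy y' hy' heq
    have := congrArg (fun z => dig q z (U r)) heq
    simpa [dig_setd_eq q0 hU1r (Finset.mem_range.mp hy),
      dig_setd_eq q0 hU1r (Finset.mem_range.mp hy')] using this

section core
variable {q m d v b : ℕ} {mα : ℕ → ℕ} {π : ℕ → ℕ → ℕ} {a : ℕ → ℕ → ℕ}

/-- digit as element of `ZMod q` -/
def X (q i u : ℕ) : ZMod q := (dig q i u : ZMod q)

def Qf (q d : ℕ) (mα : ℕ → ℕ) (π : ℕ → ℕ → ℕ) (a : ℕ → ℕ → ℕ) (i : ℕ) : ZMod q :=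
  ∑ α ∈ Finset.Icc 1 d, ∑ β ∈ Finset.Icc 1 (mα α - 1),
    (a α β : ZMod q) * X q i (π α β) * X q i (π α (β+1))

def Hf (q m : ℕ) (h : ℕ → ℕ → ZMod q) (i : ℕ) : ZMod q :=
  ∑ l ∈ Finset.Icc 1 (q-1), ∑ u' ∈ Finset.Icc 1 m, h u' l * X q i u' ^ l

def Pf (q m d v : ℕ) (mα : ℕ → ℕ) (π : ℕ → ℕ → ℕ) (p i : ℕ) : ZMod q :=
  (∑ α ∈ Finset.Icc 1 d, (dig q p α : ZMod q) * X q i (π α (mα α)))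
    + ∑ k ∈ Finset.Icc 1 v, (dig q p (k + d) : ZMod q) * X q i (m - v + k)

def Gf (q m d v b : ℕ) (mα : ℕ → ℕ) (π : ℕ → ℕ → ℕ) (a : ℕ → ℕ → ℕ)
    (h : ℕ → ℕ → ZMod q) (p p' i j : ℕ) : ZMod q :=
  (Qf q d mα π a i - Qf q d mα π a j) + (Hf q m h i - Hf q m h j)
    + (b : ZMod q) * (Pf q m d v mα π p i - Pf q m d v mα π p' j)

lemma fpn_split (h : ℕ → ℕ → ZMod q) (h0 : ZMod q) (p p' n i j : ℕ) :
    fpnZ q m d v b mα π a h h0 p n i - fpnZ q m d v b mα π a h h0 p' n j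
      = Gf q m d v b mα π a h p p' i j
        + ∑ α ∈ Finset.Icc 1 d, (dig q n α : ZMod q) * (X q i (π α 1) - X q j (π α 1)) := by
  simp only [fpnZ, Gf, Qf, Hf, Pf, X, mul_sub, Finset.sum_sub_distrib]
  ring

lemma castdig (hq0 : 0 < q) {x y w : ℕ} :
    (dig q x w : ZMod q) = (dig q y w : ZMod q) ↔ dig q x w = dig q y w := by
  constructor
  · intro hh
    have := congrArg ZMod.val hh
    rwa [ZMod.val_cast_of_lt (dig_lt hq0 x w), ZMod.val_cast_of_lt (dig_lt hq0 y w)] at this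
  · intro hh; rw [hh]

lemma setd_shift {u t i y : ℕ} (hu : 1 ≤ u) (hdig : dig q i u = dig q (i+t) u) :
    setd q (i+t) u y = setd q i u y + t := by
  have h1 := setd_add (q := q) hu y i
  have h2 := setd_add (q := q) hu y (i+t)
  rw [← hdig] at h2
  omega

lemma pi_surj (hd : 1 ≤ d) (hsum : ∑ α ∈ Finset.Icc 1 d, mα α = m - v)
    (hrange : ∀ α ∈ Finset.Icc 1 d, ∀ β ∈ Finset.Icc 1 (mα α), π α β ∈ Finset.Icc 1 (m - v))
    (hinj : ∀ α ∈ Finset.Icc 1 d, ∀ β ∈ Finset.Icc 1 (mα α), ∀ α' ∈ Finset.Icc 1 d,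
      ∀ β' ∈ Finset.Icc 1 (mα α'), π α β = π α' β' → α = α' ∧ β = β') :
    ∀ w ∈ Finset.Icc 1 (m-v), ∃ α ∈ Finset.Icc 1 d, ∃ β ∈ Finset.Icc 1 (mα α), π α β = w := by
  classical
  set PS : Finset (ℕ × ℕ) :=
    (Finset.Icc 1 d).biUnion (fun α => (Finset.Icc 1 (mα α)).image (fun β => (α, β))) with hPS
  have hmemPS : ∀ pr : ℕ × ℕ, pr ∈ PS ↔ pr.1 ∈ Finset.Icc 1 d ∧ pr.2 ∈ Finset.Icc 1 (mα pr.1) := by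
    intro pr
    simp only [hPS, Finset.mem_biUnion, Finset.mem_image]
    constructor
    · rintro ⟨α, hα, β, hβ, rfl⟩; exact ⟨hα, hβ⟩
    · rintro ⟨h1, h2⟩; exact ⟨pr.1, h1, pr.2, h2, rfl⟩
  have hcardPS : PS.card = m - v := by
    rw [hPS, Finset.card_biUnion]
    · rw [← hsum]
      apply Finset.sum_congr rfl
      intro α _
      rw [Finset.card_image_of_injective _ (fun β β' hh => congrArg Prod.snd hh), Nat.card_Icc]; omega
    · intro α hα α' hα' hne
      simp only [Finset.disjoint_left, Finset.mem_image]
      rintro pr ⟨β, hβ, rfl⟩ ⟨β', hβ', heq⟩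
      exact hne (show α = α' from (congrArg Prod.fst heq).symm)
  have hsub : PS.image (fun pr : ℕ × ℕ => π pr.1 pr.2) ⊆ Finset.Icc 1 (m-v) := by
    intro w hw
    obtain ⟨pr, hpr, rfl⟩ := Finset.mem_image.mp hw
    obtain ⟨h1, h2⟩ := (hmemPS pr).mp hpr
    exact hrange pr.1 h1 pr.2 h2
  have hcardim : (PS.image (fun pr : ℕ × ℕ => π pr.1 pr.2)).card = m - v := by
    rw [Finset.card_image_of_injOn, hcardPS]
    intro pr hpr pr' hpr' heq
    obtain ⟨h1, h2⟩ := (hmemPS pr).mp hpr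
    obtain ⟨h1', h2'⟩ := (hmemPS pr').mp hpr'
    obtain ⟨ha, hb⟩ := hinj pr.1 h1 pr.2 h2 pr'.1 h1' pr'.2 h2' heq
    exact Prod.ext ha hb
  have heqset : PS.image (fun pr : ℕ × ℕ => π pr.1 pr.2) = Finset.Icc 1 (m-v) := by
    apply Finset.eq_of_subset_of_card_le hsub
    rw [hcardim, Nat.card_Icc]; omega
  intro w hw
  rw [← heqset] at hw
  obtain ⟨pr, hpr, rfl⟩ := Finset.mem_image.mp hw
  obtain ⟨h1, h2⟩ := (hmemPS pr).mp hpr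
  exact ⟨pr.1, h1, pr.2, h2, rfl⟩

end core

section core2
variable {q m d v b : ℕ} {mα : ℕ → ℕ} {π : ℕ → ℕ → ℕ} {a : ℕ → ℕ → ℕ}

lemma Hdiff (hq0 : 0 < q) {u : ℕ} (hu : 1 ≤ u) {y y' : ℕ} (hy : y < q) (hy' : y' < q)
    (h : ℕ → ℕ → ZMod q) (i j : ℕ) :
    Hf q m h (setd q i u y) - Hf q m h (setd q j u y)
      = Hf q m h (setd q i u y') - Hf q m h (setd q j u y') := by
  simp only [Hf, ← Finset.sum_sub_distrib, ← mul_sub]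
  apply Finset.sum_congr rfl; intro l _
  apply Finset.sum_congr rfl; intro w hw
  have hw1 : 1 ≤ w := (Finset.mem_Icc.mp hw).1
  by_cases hwu : w = u
  · subst hwu
    simp only [X, dig_setd_eq hq0 hu hy, dig_setd_eq hq0 hu hy']
    ring
  · simp only [X, dig_setd_ne hq0 hu hy hw1 hwu, dig_setd_ne hq0 hu hy' hw1 hwu]

lemma Pf_setd (hq0 : 0 < q)
    (hmα : ∀ α ∈ Finset.Icc 1 d, 1 ≤ mα α)
    (hrange : ∀ α ∈ Finset.Icc 1 d, ∀ β ∈ Finset.Icc 1 (mα α), π α β ∈ Finset.Icc 1 (m - v))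
    {u y : ℕ} (hu : 1 ≤ u) (hy : y < q) (huv : u ≤ m - v)
    (hne : ∀ α ∈ Finset.Icc 1 d, π α (mα α) ≠ u) (p i : ℕ) :
    Pf q m d v mα π p (setd q i u y) = Pf q m d v mα π p i := by
  simp only [Pf]
  congr 1
  · apply Finset.sum_congr rfl; intro α hα
    have hm : mα α ∈ Finset.Icc 1 (mα α) := Finset.mem_Icc.mpr ⟨hmα α hα, le_rfl⟩
    have h1 : 1 ≤ π α (mα α) := (Finset.mem_Icc.mp (hrange α hα (mα α) hm)).1
    rw [X, X, dig_setd_ne hq0 hu hy h1 (hne α hα)]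
  · apply Finset.sum_congr rfl; intro k hk
    have hk1 : 1 ≤ k := (Finset.mem_Icc.mp hk).1
    have h1 : 1 ≤ m - v + k := by omega
    have h2 : m - v + k ≠ u := by omega
    rw [X, X, dig_setd_ne hq0 hu hy h1 h2]

lemma Qdiff (hq0 : 0 < q)
    (hmα : ∀ α ∈ Finset.Icc 1 d, 1 ≤ mα α)
    (hrange : ∀ α ∈ Finset.Icc 1 d, ∀ β ∈ Finset.Icc 1 (mα α), π α β ∈ Finset.Icc 1 (m - v))
    (hinj : ∀ α ∈ Finset.Icc 1 d, ∀ β ∈ Finset.Icc 1 (mα α), ∀ α' ∈ Finset.Icc 1 d,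
      ∀ β' ∈ Finset.Icc 1 (mα α'), π α β = π α' β' → α = α' ∧ β = β')
    {α₀ β₀ u y : ℕ} (hy : y < q)
    (hα₀ : α₀ ∈ Finset.Icc 1 d) (hβ₀ : β₀ ∈ Finset.Icc 1 (mα α₀)) (hβ₀2 : 2 ≤ β₀)
    (hu : π α₀ (β₀ - 1) = u)
    {i j : ℕ} (hagr : ∀ β, 1 ≤ β → β < β₀ → dig q i (π α₀ β) = dig q j (π α₀ β)) :
    Qf q d mα π a (setd q i u y) - Qf q d mα π a (setd q j u y)
      = (Qf q d mα π a (setd q i u 0) - Qf q d mα π a (setd q j u 0))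
        + (a α₀ (β₀-1) : ZMod q)
          * ((dig q i (π α₀ β₀) : ZMod q) - (dig q j (π α₀ β₀) : ZMod q)) * (y : ZMod q) := by
  have hβ₀' := Finset.mem_Icc.mp hβ₀
  have hβ₀m1 : β₀ - 1 ∈ Finset.Icc 1 (mα α₀) := Finset.mem_Icc.mpr ⟨by omega, by omega⟩
  have hu1 : 1 ≤ u := by
    rw [← hu]; exact (Finset.mem_Icc.mp (hrange α₀ hα₀ (β₀-1) hβ₀m1)).1
  have hπβ₀ : 1 ≤ π α₀ β₀ := (Finset.mem_Icc.mp (hrange α₀ hα₀ β₀ hβ₀)).1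
  have hπβ₀ne : π α₀ β₀ ≠ u := by
    intro hc
    have := (hinj α₀ hα₀ β₀ hβ₀ α₀ hα₀ (β₀-1) hβ₀m1 (hc.trans hu.symm)).2
    omega
  have main : Qf q d mα π a (setd q i u y) - Qf q d mα π a (setd q j u y)
      - (Qf q d mα π a (setd q i u 0) - Qf q d mα π a (setd q j u 0))
      = (a α₀ (β₀-1) : ZMod q)
          * ((dig q i (π α₀ β₀) : ZMod q) - (dig q j (π α₀ β₀) : ZMod q)) * (y : ZMod q) := by
    simp only [Qf, ← Finset.sum_sub_distrib]
    rw [Finset.sum_eq_single_of_mem α₀ hα₀ ?hother]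
    case hother =>
      intro α hα hαne
      apply Finset.sum_eq_zero
      intro β hβ
      have hβ' := Finset.mem_Icc.mp hβ
      have hβm1 : β ∈ Finset.Icc 1 (mα α) := Finset.mem_Icc.mpr ⟨hβ'.1, by omega⟩
      have hβm2 : β + 1 ∈ Finset.Icc 1 (mα α) := Finset.mem_Icc.mpr ⟨by omega, by omega⟩
      have hp1 : 1 ≤ π α β := (Finset.mem_Icc.mp (hrange α hα β hβm1)).1
      have hp2 : 1 ≤ π α (β+1) := (Finset.mem_Icc.mp (hrange α hα (β+1) hβm2)).1
      have h1 : π α β ≠ u := fun hc =>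
        hαne (hinj α hα β hβm1 α₀ hα₀ (β₀-1) hβ₀m1 (hc.trans hu.symm)).1
      have h2 : π α (β+1) ≠ u := fun hc =>
        hαne (hinj α hα (β+1) hβm2 α₀ hα₀ (β₀-1) hβ₀m1 (hc.trans hu.symm)).1
      simp only [X, dig_setd_ne hq0 hu1 hy hp1 h1, dig_setd_ne hq0 hu1 hq0 hp1 h1,
        dig_setd_ne hq0 hu1 hy hp2 h2, dig_setd_ne hq0 hu1 hq0 hp2 h2]
      ring
    rw [Finset.sum_eq_single_of_mem (β₀-1) (Finset.mem_Icc.mpr ⟨by omega, by omega⟩) ?hotherβ]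
    case hotherβ =>
      intro β hβ hβne
      have hβ' := Finset.mem_Icc.mp hβ
      have hβm1 : β ∈ Finset.Icc 1 (mα α₀) := Finset.mem_Icc.mpr ⟨hβ'.1, by omega⟩
      have hβm2 : β + 1 ∈ Finset.Icc 1 (mα α₀) := Finset.mem_Icc.mpr ⟨by omega, by omega⟩
      have hp1 : 1 ≤ π α₀ β := (Finset.mem_Icc.mp (hrange α₀ hα₀ β hβm1)).1
      have hp2 : 1 ≤ π α₀ (β+1) := (Finset.mem_Icc.mp (hrange α₀ hα₀ (β+1) hβm2)).1
      have h1 : π α₀ β ≠ u := fun hc => by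
        have := (hinj α₀ hα₀ β hβm1 α₀ hα₀ (β₀-1) hβ₀m1 (hc.trans hu.symm)).2
        omega
      by_cases hc : β + 1 = β₀ - 1
      · -- π α₀ (β+1) = u; left neighbours agree
        have hβlt : β < β₀ := by omega
        have heqd : (dig q i (π α₀ β) : ZMod q) = (dig q j (π α₀ β) : ZMod q) := by
          rw [hagr β hβ'.1 hβlt]
        have hpu : π α₀ (β+1) = u := by rw [hc, hu]
        simp only [X, dig_setd_ne hq0 hu1 hy hp1 h1, dig_setd_ne hq0 hu1 hq0 hp1 h1,
          hpu, dig_setd_eq hq0 hu1 hy, dig_setd_eq hq0 hu1 hq0]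
        rw [heqd]; ring
      · have h2 : π α₀ (β+1) ≠ u := fun hcc => by
          have := (hinj α₀ hα₀ (β+1) hβm2 α₀ hα₀ (β₀-1) hβ₀m1 (hcc.trans hu.symm)).2
          omega
        simp only [X, dig_setd_ne hq0 hu1 hy hp1 h1, dig_setd_ne hq0 hu1 hq0 hp1 h1,
          dig_setd_ne hq0 hu1 hy hp2 h2, dig_setd_ne hq0 hu1 hq0 hp2 h2]
        ring
    -- main term
    have hsucc : β₀ - 1 + 1 = β₀ := by omega
    have hpu : π α₀ (β₀-1) = u := hu
    simp only [X, hsucc, hpu, dig_setd_eq hq0 hu1 hy, dig_setd_eq hq0 hu1 hq0,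
      dig_setd_ne hq0 hu1 hy hπβ₀ hπβ₀ne, dig_setd_ne hq0 hu1 hq0 hπβ₀ hπβ₀ne]
    push_cast
    ring
  linear_combination main

end core2

lemma keylemma (q m d v b : ℕ) (hq : 2 ≤ q) (hv : 1 ≤ v) (hvm : v < m) (hd : 1 ≤ d)
    (hdmv : d ≤ m - v)
    (mα : ℕ → ℕ) (hmα : ∀ α ∈ Finset.Icc 1 d, 1 ≤ mα α)
    (hsum : ∑ α ∈ Finset.Icc 1 d, mα α = m - v)
    (π : ℕ → ℕ → ℕ)
    (hrange : ∀ α ∈ Finset.Icc 1 d, ∀ β ∈ Finset.Icc 1 (mα α), π α β ∈ Finset.Icc 1 (m - v))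
    (hinj : ∀ α ∈ Finset.Icc 1 d, ∀ β ∈ Finset.Icc 1 (mα α), ∀ α' ∈ Finset.Icc 1 d,
      ∀ β' ∈ Finset.Icc 1 (mα α'), π α β = π α' β' → α = α' ∧ β = β')
    (a : ℕ → ℕ → ℕ)
    (hacop : ∀ α ∈ Finset.Icc 1 d, ∀ β ∈ Finset.Icc 1 (mα α - 1), Nat.Coprime (a α β) q)
    (hbcop : Nat.Coprime b q)
    (h : ℕ → ℕ → ZMod q) (h0 : ZMod q)
    (p p' t : ℕ) (hp : p < q^(v+d)) (hp' : p' < q^(v+d)) (ht : t < q^(m-v))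
    (hne0 : t ≠ 0 ∨ p ≠ p') :
    ∑ n ∈ Finset.range (q^d), ∑ i ∈ Finset.range (q^m - t),
      ec q (fpnZ q m d v b mα π a h h0 p n i - fpnZ q m d v b mα π a h h0 p' n (i+t)) = 0 := by
  classical
  have hq0 : 0 < q := by omega
  have hbu : IsUnit (b : ZMod q) := (ZMod.isUnit_iff_coprime b q).mpr hbcop
  set G : ℕ → ZMod q := fun i => Gf q m d v b mα π a h p p' i (i+t) with hG
  set cond : ℕ → Prop := fun i => ∀ α ∈ Finset.Icc 1 d,
    X q i (π α 1) - X q (i+t) (π α 1) = 0 with hcnd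
  set T : Finset ℕ := (Finset.range (q^m - t)).filter cond with hT
  have hmain : ∑ i ∈ T, ec q (G i) = 0 := by
    by_cases ht0 : t = 0
    · subst ht0
      have hpp' : p ≠ p' := by tauto
      have hTeq : T = Finset.range (q^m) := by
        rw [hT, Nat.sub_zero]
        apply Finset.filter_true_of_mem
        intro i _
        simp only [hcnd]
        intro α hα
        simp [X]
      obtain ⟨s, hs1, hs2, hsd⟩ : ∃ s, 1 ≤ s ∧ s ≤ v+d ∧ dig q p s ≠ dig q p' s := by
        by_contra hcon
        push_neg at hcon
        exact hpp' (eq_of_dig_eq hq0 (fun s a b => hcon s a b) hp hp')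
      set u₀ : ℕ := if s ≤ d then π s (mα s) else m - v + (s - d) with hu₀
      have hsmem : s ≤ d → s ∈ Finset.Icc 1 d := fun hsd' => Finset.mem_Icc.mpr ⟨hs1, hsd'⟩
      have hmem' : ∀ hsd' : s ≤ d, mα s ∈ Finset.Icc 1 (mα s) := fun hsd' =>
        Finset.mem_Icc.mpr ⟨hmα s (hsmem hsd'), le_rfl⟩
      have hu₀prop : 1 ≤ u₀ ∧ u₀ ≤ m := by
        rw [hu₀]; split_ifs with hcase
        · have := Finset.mem_Icc.mp (hrange s (hsmem hcase) (mα s) (hmem' hcase))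
          omega
        · omega
      have hδ : ((dig q p s : ZMod q) - (dig q p' s : ZMod q)) ≠ 0 := by
        intro hzz
        exact hsd ((castdig hq0).mp (sub_eq_zero.mp hzz))
      have hc0 : (b : ZMod q) * ((dig q p s : ZMod q) - dig q p' s) ≠ 0 := by
        intro hzz
        exact hδ ((hbu.mul_right_eq_zero).mp hzz)
      rw [hTeq]
      apply groupzero hq _ (fun _ => u₀) _
      · intro i _; exact hu₀prop.1
      · intro i hi y hy
        refine ⟨?_, rfl⟩
        rw [Finset.mem_range] at hi ⊢
        exact setd_lt hq0 hu₀prop.1 hu₀prop.2 hy hi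
      · intro i hi
        have hPkey : ∀ y, y < q → G (setd q i u₀ y)
            = (b : ZMod q) * (Pf q m d v mα π p (setd q i u₀ 0)
                - Pf q m d v mα π p' (setd q i u₀ 0))
              + ((b : ZMod q) * ((dig q p s : ZMod q) - dig q p' s)) * (y : ZMod q) := by
          intro y hy
          have hG0 : ∀ x : ℕ, G x = (b:ZMod q) * (Pf q m d v mα π p x - Pf q m d v mα π p' x) := by
            intro x
            simp only [hG, Gf, Nat.add_zero, sub_self, add_zero, zero_add]
          rw [hG0]
          have hPd : ∀ x : ℕ, Pf q m d v mα π p x - Pf q m d v mα π p' x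
              = ∑ α ∈ Finset.Icc 1 d, ((dig q p α : ZMod q) - dig q p' α) * X q x (π α (mα α))
                + ∑ k ∈ Finset.Icc 1 v, ((dig q p (k+d) : ZMod q) - dig q p' (k+d)) * X q x (m-v+k) := by
            intro x
            simp only [Pf, sub_mul, Finset.sum_sub_distrib]
            ring
          have hkey2 : Pf q m d v mα π p (setd q i u₀ y) - Pf q m d v mα π p' (setd q i u₀ y)
              = (Pf q m d v mα π p (setd q i u₀ 0) - Pf q m d v mα π p' (setd q i u₀ 0))
                + ((dig q p s : ZMod q) - dig q p' s) * (y : ZMod q) := by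
            rw [hPd, hPd]
            rcases le_or_gt s d with hsle | hsgt
            · have hu₀eq : u₀ = π s (mα s) := by rw [hu₀, if_pos hsle]
              have hsecond : ∀ k ∈ Finset.Icc 1 v,
                  ((dig q p (k+d) : ZMod q) - dig q p' (k+d)) * X q (setd q i u₀ y) (m-v+k)
                  = ((dig q p (k+d) : ZMod q) - dig q p' (k+d)) * X q (setd q i u₀ 0) (m-v+k) := by
                intro k hk
                have hk1 := (Finset.mem_Icc.mp hk).1
                have hle : u₀ ≤ m - v := by
                  rw [hu₀eq]
                  exact (Finset.mem_Icc.mp (hrange s (hsmem hsle) (mα s) (hmem' hsle))).2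
                rw [X, X, dig_setd_ne hq0 hu₀prop.1 hy (by omega) (by omega),
                  dig_setd_ne hq0 hu₀prop.1 hq0 (by omega) (by omega)]
              have hfirst : ∑ α ∈ Finset.Icc 1 d,
                    (((dig q p α : ZMod q) - dig q p' α) * X q (setd q i u₀ y) (π α (mα α))
                     - ((dig q p α : ZMod q) - dig q p' α) * X q (setd q i u₀ 0) (π α (mα α)))
                  = ((dig q p s : ZMod q) - dig q p' s) * (y : ZMod q) := by
                rw [Finset.sum_eq_single_of_mem s (hsmem hsle)]
                · rw [X, X, ← hu₀eq, dig_setd_eq hq0 hu₀prop.1 hy, dig_setd_eq hq0 hu₀prop.1 hq0]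
                  push_cast
                  ring
                · intro α hα hαne
                  have hmm : mα α ∈ Finset.Icc 1 (mα α) := Finset.mem_Icc.mpr ⟨hmα α hα, le_rfl⟩
                  have hp1 : 1 ≤ π α (mα α) := (Finset.mem_Icc.mp (hrange α hα (mα α) hmm)).1
                  have hnn : π α (mα α) ≠ u₀ := by
                    rw [hu₀eq]
                    intro hcc
                    exact hαne (hinj α hα (mα α) hmm s (hsmem hsle) (mα s) (hmem' hsle) hcc).1
                  rw [X, X, dig_setd_ne hq0 hu₀prop.1 hy hp1 hnn,
                    dig_setd_ne hq0 hu₀prop.1 hq0 hp1 hnn]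
                  ring
              rw [Finset.sum_congr rfl hsecond]
              rw [Finset.sum_sub_distrib] at hfirst
              linear_combination hfirst
            · have hu₀eq : u₀ = m - v + (s - d) := by rw [hu₀, if_neg (by omega)]
              have hfirst : ∀ α ∈ Finset.Icc 1 d,
                  ((dig q p α : ZMod q) - dig q p' α) * X q (setd q i u₀ y) (π α (mα α))
                  = ((dig q p α : ZMod q) - dig q p' α) * X q (setd q i u₀ 0) (π α (mα α)) := by
                intro α hα
                have hmm : mα α ∈ Finset.Icc 1 (mα α) := Finset.mem_Icc.mpr ⟨hmα α hα, le_rfl⟩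
                have hrr := Finset.mem_Icc.mp (hrange α hα (mα α) hmm)
                have hnn : π α (mα α) ≠ u₀ := by omega
                rw [X, X, dig_setd_ne hq0 hu₀prop.1 hy hrr.1 hnn,
                  dig_setd_ne hq0 hu₀prop.1 hq0 hrr.1 hnn]
              have hsecond : ∑ k ∈ Finset.Icc 1 v,
                    (((dig q p (k+d) : ZMod q) - dig q p' (k+d)) * X q (setd q i u₀ y) (m-v+k)
                     - ((dig q p (k+d) : ZMod q) - dig q p' (k+d)) * X q (setd q i u₀ 0) (m-v+k))
                  = ((dig q p s : ZMod q) - dig q p' s) * (y : ZMod q) := by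
                rw [Finset.sum_eq_single_of_mem (s-d) (Finset.mem_Icc.mpr ⟨by omega, by omega⟩)]
                · have hsd' : s - d + d = s := by omega
                  have huu : m - v + (s - d) = u₀ := hu₀eq.symm
                  rw [X, X, hsd', huu, dig_setd_eq hq0 hu₀prop.1 hy, dig_setd_eq hq0 hu₀prop.1 hq0]
                  push_cast; ring
                · intro k hk hkne
                  have hk1 := (Finset.mem_Icc.mp hk).1
                  have hnn : m - v + k ≠ u₀ := by omega
                  rw [X, X, dig_setd_ne hq0 hu₀prop.1 hy (by omega) hnn,
                    dig_setd_ne hq0 hu₀prop.1 hq0 (by omega) hnn]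
                  ring
              rw [Finset.sum_congr rfl hfirst]
              rw [Finset.sum_sub_distrib] at hsecond
              linear_combination hsecond
          rw [hkey2]
          ring
        calc ∑ y ∈ Finset.range q, ec q (G (setd q i u₀ y))
            = ∑ y ∈ Finset.range q, ec q ((b : ZMod q) * (Pf q m d v mα π p (setd q i u₀ 0)
                - Pf q m d v mα π p' (setd q i u₀ 0))
              + ((b : ZMod q) * ((dig q p s : ZMod q) - dig q p' s)) * (y:ZMod q)) := by
              apply Finset.sum_congr rfl; intro y hy
              rw [hPkey y (Finset.mem_range.mp hy)]
          _ = 0 := csum hq hc0 _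
    · -- t ≠ 0
      have hwlow : ∀ i ∈ T, ∀ α ∈ Finset.Icc 1 d, ∀ β ∈ Finset.Icc 1 (mα α), 1 ≤ π α β :=
        fun i _ α hα β hβ => (Finset.mem_Icc.mp (hrange α hα β hβ)).1
      set Dp : ℕ → ℕ → Prop := fun i w => dig q i w ≠ dig q (i+t) w with hDp
      set A : ℕ → Set ℕ :=
        fun i => {α | α ∈ Finset.Icc 1 d ∧ ∃ β ∈ Finset.Icc 1 (mα α), Dp i (π α β)} with hA
      set a₀ : ℕ → ℕ := fun i => sInf (A i) with ha₀
      set B : ℕ → Set ℕ :=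
        fun i => {β | β ∈ Finset.Icc 1 (mα (a₀ i)) ∧ Dp i (π (a₀ i) β)} with hB
      set b₀ : ℕ → ℕ := fun i => sInf (B i) with hb₀
      set U : ℕ → ℕ := fun i => π (a₀ i) (b₀ i - 1) with hU
      have hTmem : ∀ i ∈ T, i < q^m - t
          ∧ ∀ α ∈ Finset.Icc 1 d, dig q i (π α 1) = dig q (i+t) (π α 1) := by
        intro i hi
        rw [hT, Finset.mem_filter, Finset.mem_range] at hi
        refine ⟨hi.1, fun α hα => ?_⟩
        have h2 := hi.2
        rw [hcnd] at h2
        exact (castdig hq0).mp (sub_eq_zero.mp (h2 α hα))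
      have hfacts : ∀ i ∈ T, (a₀ i ∈ Finset.Icc 1 d) ∧ (b₀ i ∈ Finset.Icc 1 (mα (a₀ i)))
          ∧ 2 ≤ b₀ i ∧ dig q i (π (a₀ i) (b₀ i)) ≠ dig q (i+t) (π (a₀ i) (b₀ i))
          ∧ (∀ β, 1 ≤ β → β < b₀ i → dig q i (π (a₀ i) β) = dig q (i+t) (π (a₀ i) β)) := by
        intro i hi
        obtain ⟨hi1, hi2⟩ := hTmem i hi
        have hwex : ∃ w, 1 ≤ w ∧ w ≤ m - v ∧ dig q i w ≠ dig q (i+t) w := by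
          by_contra hcon
          push_neg at hcon
          have hmm : i % q^(m-v) = (i+t) % q^(m-v) :=
            mod_eq_of_dig_eq hq0 (fun s' hs1 hs2 => hcon s' hs1 hs2)
          have hmod : 0 ≡ t [MOD q^(m-v)] :=
            Nat.ModEq.add_left_cancel' i (by simpa [Nat.ModEq] using hmm)
          have hdvd : q^(m-v) ∣ t := (Nat.modEq_zero_iff_dvd).mp hmod.symm
          have := Nat.le_of_dvd (Nat.pos_of_ne_zero ht0) hdvd
          omega
        obtain ⟨w, hw1, hw2, hwD⟩ := hwex
        obtain ⟨α, hαm, β, hβm, hπ⟩ :=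
          pi_surj hd hsum hrange hinj w (Finset.mem_Icc.mpr ⟨hw1, hw2⟩)
        have hAne : (A i).Nonempty := by
          refine ⟨α, ?_⟩
          simp only [hA, Set.mem_setOf_eq, hDp]
          exact ⟨hαm, β, hβm, by rw [hπ]; exact hwD⟩
        have haA : a₀ i ∈ A i := Nat.sInf_mem hAne
        simp only [hA, Set.mem_setOf_eq] at haA
        have hBne : (B i).Nonempty := by
          obtain ⟨hm1, β', hβ', hD'⟩ := haA
          refine ⟨β', ?_⟩
          simp only [hB, Set.mem_setOf_eq]
          exact ⟨hβ', hD'⟩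
        have hbB : b₀ i ∈ B i := Nat.sInf_mem hBne
        simp only [hB, Set.mem_setOf_eq, hDp] at hbB
        obtain ⟨hbm, hbD⟩ := hbB
        have hb1 := (Finset.mem_Icc.mp hbm).1
        have hb2 : 2 ≤ b₀ i := by
          rcases Nat.lt_or_ge (b₀ i) 2 with hlt | hge
          · exfalso
            have hb1' : b₀ i = 1 := by omega
            apply hbD
            rw [hb1']
            exact hi2 (a₀ i) haA.1
          · exact hge
        refine ⟨haA.1, hbm, hb2, hbD, ?_⟩
        intro β' hβ'1 hβ'lt
        by_contra hcc
        have : β' ∈ B i := by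
          simp only [hB, Set.mem_setOf_eq, hDp]
          refine ⟨Finset.mem_Icc.mpr ⟨hβ'1, ?_⟩, hcc⟩
          have := (Finset.mem_Icc.mp hbm).2
          omega
        have h7 : b₀ i ≤ β' := Nat.sInf_le this
        omega
      have hUprop : ∀ i ∈ T, 1 ≤ U i ∧ U i ≤ m - v := by
        intro i hi
        obtain ⟨h1, h2, h3, _, _⟩ := hfacts i hi
        have hbm1 : b₀ i - 1 ∈ Finset.Icc 1 (mα (a₀ i)) := by
          have := Finset.mem_Icc.mp h2
          exact Finset.mem_Icc.mpr ⟨by omega, by omega⟩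
        have := Finset.mem_Icc.mp (hrange (a₀ i) h1 (b₀ i - 1) hbm1)
        rw [hU]
        exact this
      have hagreeU : ∀ i ∈ T, dig q i (U i) = dig q (i+t) (U i) := by
        intro i hi
        obtain ⟨h1, h2, h3, _, h5⟩ := hfacts i hi
        exact h5 (b₀ i - 1) (by omega) (by omega)
      have hshift : ∀ i ∈ T, ∀ y : ℕ, setd q i (U i) y + t = setd q (i+t) (U i) y :=
        fun i hi y => (setd_shift (hUprop i hi).1 (hagreeU i hi)).symm
      have hdigiff : ∀ i ∈ T, ∀ y, y < q → ∀ w, 1 ≤ w →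
          ((dig q (setd q i (U i) y) w ≠ dig q (setd q i (U i) y + t) w)
            ↔ (dig q i w ≠ dig q (i+t) w)) := by
        intro i hi y hy w hw
        rw [hshift i hi y]
        by_cases hwu : w = U i
        · subst hwu
          rw [dig_setd_eq hq0 (hUprop i hi).1 hy, dig_setd_eq hq0 (hUprop i hi).1 hy]
          simp [hagreeU i hi]
        · rw [dig_setd_ne hq0 (hUprop i hi).1 hy hw hwu,
            dig_setd_ne hq0 (hUprop i hi).1 hy hw hwu]
      have hstabT : ∀ i ∈ T, ∀ y, y < q → setd q i (U i) y ∈ T := by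
        intro i hi y hy
        obtain ⟨hi1, hi2⟩ := hTmem i hi
        have hit : i + t < q ^ m := by omega
        have hlt2 : setd q (i+t) (U i) y < q ^ m :=
          setd_lt hq0 (hUprop i hi).1 (by have := (hUprop i hi).2; omega) hy hit
        have hlt1 : setd q i (U i) y < q ^ m - t := by
          have := hshift i hi y
          omega
        rw [hT, Finset.mem_filter, Finset.mem_range]
        refine ⟨hlt1, ?_⟩
        rw [hcnd]
        intro α hα
        rw [sub_eq_zero, X, X]
        have hα1m : (1:ℕ) ∈ Finset.Icc 1 (mα α) := Finset.mem_Icc.mpr ⟨le_rfl, hmα α hα⟩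
        have hπ1 : 1 ≤ π α 1 := (Finset.mem_Icc.mp (hrange α hα 1 hα1m)).1
        rw [(castdig hq0 (q := q)), hshift i hi y]
        by_cases hwu : π α 1 = U i
        · rw [hwu, dig_setd_eq hq0 (hUprop i hi).1 hy, dig_setd_eq hq0 (hUprop i hi).1 hy]
        · rw [dig_setd_ne hq0 (hUprop i hi).1 hy hπ1 hwu,
            dig_setd_ne hq0 (hUprop i hi).1 hy hπ1 hwu]
          exact hi2 α hα
      have hUinv : ∀ i ∈ T, ∀ y, y < q → U (setd q i (U i) y) = U i := by
        intro i hi y hy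
        have hAeq : A (setd q i (U i) y) = A i := by
          apply Set.ext
          intro α
          simp only [hA, Set.mem_setOf_eq, hDp]
          constructor
          · rintro ⟨hαm, β, hβm, hD⟩
            exact ⟨hαm, β, hβm,
              (hdigiff i hi y hy (π α β) (hwlow i hi α hαm β hβm)).mp hD⟩
          · rintro ⟨hαm, β, hβm, hD⟩
            exact ⟨hαm, β, hβm,
              (hdigiff i hi y hy (π α β) (hwlow i hi α hαm β hβm)).mpr hD⟩
        have ha₀eq : a₀ (setd q i (U i) y) = a₀ i := by
          rw [ha₀]
          simp only
          rw [hAeq]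
        have hBeq : B (setd q i (U i) y) = B i := by
          apply Set.ext
          intro β
          simp only [hB, Set.mem_setOf_eq, hDp, ha₀eq]
          constructor
          · rintro ⟨hβm, hD⟩
            exact ⟨hβm, (hdigiff i hi y hy (π (a₀ i) β)
              (hwlow i hi (a₀ i) (hfacts i hi).1 β hβm)).mp hD⟩
          · rintro ⟨hβm, hD⟩
            exact ⟨hβm, (hdigiff i hi y hy (π (a₀ i) β)
              (hwlow i hi (a₀ i) (hfacts i hi).1 β hβm)).mpr hD⟩
        have hb₀eq : b₀ (setd q i (U i) y) = b₀ i := by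
          rw [hb₀]
          simp only
          rw [hBeq]
        rw [hU]
        simp only
        rw [ha₀eq, hb₀eq]
      apply groupzero hq T U (fun i => ec q (G i))
      · intro i hi; exact (hUprop i hi).1
      · intro i hi y hy
        exact ⟨hstabT i hi y hy, hUinv i hi y hy⟩
      · intro i hi
        obtain ⟨hf1, hf2, hf3, hf4, hf5⟩ := hfacts i hi
        have hu1 : 1 ≤ U i := (hUprop i hi).1
        have hbm' := Finset.mem_Icc.mp hf2
        have hbm1 : b₀ i - 1 ∈ Finset.Icc 1 (mα (a₀ i)) := Finset.mem_Icc.mpr ⟨by omega, by omega⟩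
        have hueq : π (a₀ i) (b₀ i - 1) = U i := by rw [hU]
        have hπβ₀m : π (a₀ i) (b₀ i) ∈ Finset.Icc 1 (m - v) := hrange (a₀ i) hf1 (b₀ i) hf2
        -- Pf is unaffected by changing digit U i
        have hPne : ∀ α ∈ Finset.Icc 1 d, π α (mα α) ≠ U i := by
          intro α hα hcc
          have hmm : mα α ∈ Finset.Icc 1 (mα α) := Finset.mem_Icc.mpr ⟨hmα α hα, le_rfl⟩
          obtain ⟨he1, he2⟩ := hinj α hα (mα α) hmm (a₀ i) hf1 (b₀ i - 1) hbm1 (hcc.trans hueq.symm)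
          subst he1
          omega
        have hc₁ : (a (a₀ i) (b₀ i - 1) : ZMod q)
            * ((dig q i (π (a₀ i) (b₀ i)) : ZMod q) - dig q (i+t) (π (a₀ i) (b₀ i))) ≠ 0 := by
          have hau : IsUnit ((a (a₀ i) (b₀ i - 1) : ZMod q)) :=
            (ZMod.isUnit_iff_coprime _ q).mpr
              (hacop (a₀ i) hf1 (b₀ i - 1) (Finset.mem_Icc.mpr ⟨by omega, by omega⟩))
          intro hzz
          have := (hau.mul_right_eq_zero).mp hzz
          exact hf4 ((castdig hq0).mp (sub_eq_zero.mp this))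
        have hGy : ∀ y, y < q → G (setd q i (U i) y)
            = ((Qf q d mα π a (setd q i (U i) 0) - Qf q d mα π a (setd q (i+t) (U i) 0))
              + (Hf q m h (setd q i (U i) 0) - Hf q m h (setd q (i+t) (U i) 0))
              + (b : ZMod q) * (Pf q m d v mα π p i - Pf q m d v mα π p' (i+t)))
              + ((a (a₀ i) (b₀ i - 1) : ZMod q)
                * ((dig q i (π (a₀ i) (b₀ i)) : ZMod q) - dig q (i+t) (π (a₀ i) (b₀ i))))
                * (y : ZMod q) := by
          intro y hy
          have hGdef : G (setd q i (U i) y)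
              = Gf q m d v b mα π a h p p' (setd q i (U i) y) (setd q (i+t) (U i) y) := by
            rw [hG]
            simp only
            rw [hshift i hi y]
          rw [hGdef, Gf]
          rw [Qdiff hq0 hmα hrange hinj hy hf1 hf2 hf3 hueq hf5]
          rw [Hdiff hq0 hu1 hy hq0 h i (i+t)]
          rw [Pf_setd hq0 hmα hrange hu1 hy (hUprop i hi).2 hPne p i]
          rw [Pf_setd hq0 hmα hrange hu1 hy (hUprop i hi).2 hPne p' (i+t)]
          ring
        calc ∑ y ∈ Finset.range q, ec q (G (setd q i (U i) y))
            = ∑ y ∈ Finset.range q, ec q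
              (((Qf q d mα π a (setd q i (U i) 0) - Qf q d mα π a (setd q (i+t) (U i) 0))
              + (Hf q m h (setd q i (U i) 0) - Hf q m h (setd q (i+t) (U i) 0))
              + (b : ZMod q) * (Pf q m d v mα π p i - Pf q m d v mα π p' (i+t)))
              + ((a (a₀ i) (b₀ i - 1) : ZMod q)
                * ((dig q i (π (a₀ i) (b₀ i)) : ZMod q) - dig q (i+t) (π (a₀ i) (b₀ i))))
                * (y : ZMod q)) := by
              apply Finset.sum_congr rfl; intro y hy
              rw [hGy y (Finset.mem_range.mp hy)]
          _ = 0 := csum hq hc₁ _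
  rw [Finset.sum_comm]
  have hstep : ∀ i ∈ Finset.range (q^m - t), ∑ n ∈ Finset.range (q^d),
      ec q (fpnZ q m d v b mα π a h h0 p n i - fpnZ q m d v b mα π a h h0 p' n (i+t))
      = if cond i then (q:ℂ)^d * ec q (G i) else 0 := by
    intro i _
    have hsp : ∀ n, fpnZ q m d v b mα π a h h0 p n i - fpnZ q m d v b mα π a h h0 p' n (i+t)
        = G i + ∑ α ∈ Finset.Icc 1 d,
            (dig q n α : ZMod q) * (X q i (π α 1) - X q (i+t) (π α 1)) := fun n =>
      fpn_split h h0 p p' n i (i+t)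
    calc ∑ n ∈ Finset.range (q^d),
          ec q (fpnZ q m d v b mα π a h h0 p n i - fpnZ q m d v b mα π a h h0 p' n (i+t))
        = ∑ n ∈ Finset.range (q^d), ec q (G i + ∑ α ∈ Finset.Icc 1 d,
            (dig q n α : ZMod q) * (X q i (π α 1) - X q (i+t) (π α 1))) := by
          apply Finset.sum_congr rfl; intro n _; rw [hsp n]
      _ = if cond i then (q:ℂ)^d * ec q (G i) else 0 :=
          digitsum hq d (fun α => X q i (π α 1) - X q (i+t) (π α 1)) (G i)
  rw [Finset.sum_congr rfl hstep, ← Finset.sum_filter, ← hT, ← Finset.mul_sum, hmain, mul_zero]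

lemma ec_conj {q : ℕ} (hq : 2 ≤ q) (x : ZMod q) : ec q (-x) = starRingEnd ℂ (ec q x) := by
  have habs : ‖ec q x‖ = 1 := by
    rw [ec, xiq_pow]
    have hh : (2 * (Real.pi:ℂ) * Complex.I * x.val / q)
        = ((2 * Real.pi * x.val / q : ℝ) : ℂ) * Complex.I := by push_cast; ring
    rw [hh, Complex.norm_exp_ofReal_mul_I]
  have h1 : ec q (-x) * ec q x = 1 := by
    rw [← ec_add hq, neg_add_cancel, ec_zero hq]
  have h2 : (starRingEnd ℂ) (ec q x) * ec q x = 1 := by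
    rw [mul_comm, Complex.mul_conj, Complex.normSq_eq_norm_sq, habs]
    norm_num
  exact mul_right_cancel₀ (ec_ne_zero x) (h1.trans h2.symm)

lemma Rq_neg {q : ℕ} (hq : 2 ≤ q) (len : ℕ) (aa bb : ℕ → ZMod q) (τ : ℤ) (hτ : τ < 0) :
    Rq q len aa bb τ = starRingEnd ℂ (Rq q len bb aa (-τ)) := by
  rw [Rq, if_neg (by omega), Rq, if_pos (by omega : (0:ℤ) ≤ -τ), map_sum]
  apply Finset.sum_congr rfl
  intro i _
  rw [← ec_conj hq, neg_sub]

lemma Rq_diag {q : ℕ} (hq : 2 ≤ q) (len : ℕ) (aa : ℕ → ZMod q) :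
    Rq q len aa aa 0 = (len : ℂ) := by
  rw [Rq, if_pos le_rfl]
  have : ∀ i ∈ Finset.range (len - (0:ℤ).toNat), ec q (aa i - aa (i + (0:ℤ).toNat)) = 1 := by
    intro i _
    simp [ec_zero hq]
  rw [Finset.sum_congr rfl this, Finset.sum_const, Finset.card_range]
  simp

/-- Theorem 4: the family `{F^0,…,F^{q^{v+d}-1}}` is an optimal
`(q^{v+d}, q^d, q^m, q^{m-v})`-ZCCS. -/
theorem stmt11 (q m d v b : ℕ) (hq : 2 ≤ q) (hv : 1 ≤ v) (hvm : v < m) (hd : 1 ≤ d)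
    (hdmv : d ≤ m - v)
    (mα : ℕ → ℕ) (hmα : ∀ α ∈ Finset.Icc 1 d, 1 ≤ mα α)
    (hsum : ∑ α ∈ Finset.Icc 1 d, mα α = m - v)
    (π : ℕ → ℕ → ℕ)
    (hrange : ∀ α ∈ Finset.Icc 1 d, ∀ β ∈ Finset.Icc 1 (mα α), π α β ∈ Finset.Icc 1 (m - v))
    (hinj : ∀ α ∈ Finset.Icc 1 d, ∀ β ∈ Finset.Icc 1 (mα α), ∀ α' ∈ Finset.Icc 1 d,
      ∀ β' ∈ Finset.Icc 1 (mα α'), π α β = π α' β' → α = α' ∧ β = β')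
    (a : ℕ → ℕ → ℕ)
    (hacop : ∀ α ∈ Finset.Icc 1 d, ∀ β ∈ Finset.Icc 1 (mα α - 1), Nat.Coprime (a α β) q)
    (hbcop : Nat.Coprime b q)
    (h : ℕ → ℕ → ZMod q) (h0 : ZMod q) :
    (∀ p < q ^ (v + d),
      ∑ n ∈ Finset.range (q ^ d),
        Rq q (q ^ m) (fpnZ q m d v b mα π a h h0 p n) (fpnZ q m d v b mα π a h h0 p n) 0
        = (q : ℂ) ^ d * (q : ℂ) ^ m) ∧
    (∀ p < q ^ (v + d), ∀ τ : ℤ, 0 < |τ| → |τ| < (q : ℤ) ^ (m - v) →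
      ∑ n ∈ Finset.range (q ^ d),
        Rq q (q ^ m) (fpnZ q m d v b mα π a h h0 p n) (fpnZ q m d v b mα π a h h0 p n) τ
        = 0) ∧
    (∀ p < q ^ (v + d), ∀ p' < q ^ (v + d), p ≠ p' → ∀ τ : ℤ, |τ| < (q : ℤ) ^ (m - v) →
      ∑ n ∈ Finset.range (q ^ d),
        Rq q (q ^ m) (fpnZ q m d v b mα π a h h0 p n) (fpnZ q m d v b mα π a h h0 p' n) τ
        = 0) ∧
    q ^ (v + d) = q ^ d * (q ^ m / q ^ (m - v)) := by
  have hq0 : 0 < q := by omega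
  have hcastpow : ∀ e : ℕ, ((q^e : ℕ) : ℤ) = (q:ℤ)^e := fun e => by push_cast; ring
  have hkeypos : ∀ p < q ^ (v+d), ∀ p' < q ^ (v+d), ∀ τ : ℤ, 0 ≤ τ →
      (τ.toNat ≠ 0 ∨ p ≠ p') → τ < (q:ℤ)^(m-v) →
      ∑ n ∈ Finset.range (q ^ d),
        Rq q (q ^ m) (fpnZ q m d v b mα π a h h0 p n) (fpnZ q m d v b mα π a h h0 p' n) τ
        = 0 := by
    intro p hp p' hp' τ hτ0 hneor hτlt
    have ht : τ.toNat < q^(m-v) := by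
      have h2 := hcastpow (m-v)
      omega
    calc ∑ n ∈ Finset.range (q ^ d),
          Rq q (q ^ m) (fpnZ q m d v b mα π a h h0 p n) (fpnZ q m d v b mα π a h h0 p' n) τ
        = ∑ n ∈ Finset.range (q ^ d), ∑ i ∈ Finset.range (q^m - τ.toNat),
            ec q (fpnZ q m d v b mα π a h h0 p n i
              - fpnZ q m d v b mα π a h h0 p' n (i + τ.toNat)) := by
          apply Finset.sum_congr rfl; intro n _
          rw [Rq, if_pos hτ0]
      _ = 0 := keylemma q m d v b hq hv hvm hd hdmv mα hmα hsum π hrange hinj a hacop hbcop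
            h h0 p p' τ.toNat hp hp' ht hneor
  have hkeyneg : ∀ p < q ^ (v+d), ∀ p' < q ^ (v+d), ∀ τ : ℤ, τ < 0 →
      ((-τ).toNat ≠ 0 ∨ p' ≠ p) → -τ < (q:ℤ)^(m-v) →
      ∑ n ∈ Finset.range (q ^ d),
        Rq q (q ^ m) (fpnZ q m d v b mα π a h h0 p n) (fpnZ q m d v b mα π a h h0 p' n) τ
        = 0 := by
    intro p hp p' hp' τ hτ0 hneor hτlt
    have hconj : ∀ n ∈ Finset.range (q^d),
        Rq q (q ^ m) (fpnZ q m d v b mα π a h h0 p n) (fpnZ q m d v b mα π a h h0 p' n) τ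
        = starRingEnd ℂ (Rq q (q ^ m) (fpnZ q m d v b mα π a h h0 p' n)
            (fpnZ q m d v b mα π a h h0 p n) (-τ)) := by
      intro n _
      exact Rq_neg hq _ _ _ τ hτ0
    rw [Finset.sum_congr rfl hconj, ← map_sum,
      hkeypos p' hp' p hp (-τ) (by omega) hneor hτlt, map_zero]
  refine ⟨?_, ?_, ?_, ?_⟩
  · intro p hp
    have hdiag : ∀ n ∈ Finset.range (q^d),
        Rq q (q ^ m) (fpnZ q m d v b mα π a h h0 p n) (fpnZ q m d v b mα π a h h0 p n) 0
        = ((q^m : ℕ) : ℂ) := fun n _ => Rq_diag hq _ _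
    rw [Finset.sum_congr rfl hdiag, Finset.sum_const, Finset.card_range, nsmul_eq_mul]
    push_cast
    ring
  · intro p hp τ hτ1 hτ2
    rcases le_or_gt 0 τ with hpos | hneg
    · apply hkeypos p hp p hp τ hpos
      · left
        rw [abs_of_nonneg hpos] at hτ1
        omega
      · rwa [abs_of_nonneg hpos] at hτ2
    · apply hkeyneg p hp p hp τ hneg
      · left
        omega
      · rwa [abs_of_neg hneg] at hτ2
  · intro p hp p' hp' hpp τ hτ2
    rcases le_or_gt 0 τ with hpos | hneg
    · apply hkeypos p hp p' hp' τ hpos (Or.inr hpp)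
      rwa [abs_of_nonneg hpos] at hτ2
    · apply hkeyneg p hp p' hp' τ hneg (Or.inr (Ne.symm hpp))
      rwa [abs_of_neg hneg] at hτ2
  · have hdiv : q ^ m / q ^ (m - v) = q ^ v := by
      rw [Nat.pow_div (by omega) hq0]
      congr 1
      omega
    rw [hdiv, ← pow_add]
    congr 1
    omega
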